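/- Let z_1, ..., z_n be the roots of a degree n complex polynomial ordered by decreasing modulus, and suppose S_j = 0 for some 1 ≤ j ≤ n-1 (the j-th elementary symmetric function of the roots). If z_j ≠ 0, then 1 ≤ (n choose j) · |z_{j+1}|/|z_j|. Equivalently, |z_1 z_2 ⋯ z_j| ≤ (n choose j) · |z_1 ⋯ z_{j-1} z_{j+1}|. -/

import Mathlib

lemma prod_le_prod_range (w : ℕ → ℝ) (hw : ∀ i, 0 ≤ w i) (n : ℕ)
    (hmono : ∀ a b, a ≤ b → b < n → w b ≤ w a) (s : Finset ℕ) :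
    (∀ m ∈ s, m < n) → ∏ i ∈ s, w i ≤ ∏ i ∈ Finset.range s.card, w i := by
  induction s using Finset.induction_on_max with
  | empty => simp
  | insert a s ha ih =>
    intro hs
    have hanotmem : a ∉ s := fun h => lt_irrefl a (ha a h)
    have hcard : s.card ≤ a := by
      simpa using Finset.card_le_card (fun b hb => Finset.mem_range.mpr (ha b hb))
    rw [Finset.prod_insert hanotmem, Finset.card_insert_of_notMem hanotmem,
      Finset.prod_range_succ]
    have han : a < n := hs a (Finset.mem_insert_self a s)
    calc w a * ∏ i ∈ s, w i
        ≤ w s.card * ∏ i ∈ Finset.range s.card, w i := by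
          exact mul_le_mul (hmono s.card a hcard han)
            (ih (fun m hm => hs m (Finset.mem_insert_of_mem hm)))
            (Finset.prod_nonneg fun i _ => hw i) (hw _)
      _ = _ := mul_comm _ _



/-- The `j`-th elementary symmetric function of the (negated) elements of a multiset. -/
noncomputable def S (A : Multiset ℂ) (j : ℕ) : ℂ :=
  ((Multiset.powersetCard j (A.map (fun z => -z))).map Multiset.prod).sum

/-- If `S_j = 0` for roots ordered by decreasing modulus and `z_j ≠ 0`, then
`1 ≤ (n choose j)·|z_{j+1}|/|z_j|`; equivalently
`|z_1⋯z_j| ≤ (n choose j)·|z_1⋯z_{j-1} z_{j+1}|`. -/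
theorem stmt1 (n : ℕ) (P : Polynomial ℂ) (z : ℕ → ℂ)
    (hP : P ≠ 0) (hdeg : P.natDegree = n)
    (hroots : P.roots = (Multiset.range n).map (fun i => z (i + 1)))
    (hord : ∀ a b, 1 ≤ a → a ≤ b → b ≤ n → ‖z b‖ ≤ ‖z a‖)
    (j : ℕ) (hj1 : 1 ≤ j) (hj2 : j ≤ n - 1)
    (hSj : S P.roots j = 0) (hz : z j ≠ 0) :
    (1 : ℝ) ≤ (n.choose j : ℝ) * (‖z (j + 1)‖ / ‖z j‖) ∧
    ‖∏ i ∈ Finset.Icc 1 j, z i‖ ≤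
      (n.choose j : ℝ) * ‖(∏ i ∈ Finset.Icc 1 (j - 1), z i) * z (j + 1)‖ := by
  have hjn : j + 1 ≤ n := by omega
  set w : ℕ → ℝ := fun i => ‖z (i + 1)‖ with hw_def
  have hw : ∀ i, 0 ≤ w i := fun i => norm_nonneg _
  have hmono : ∀ a b, a ≤ b → b < n → w b ≤ w a := fun a b hab hbn =>
    hord (a + 1) (b + 1) (by omega) (by omega) (by omega)
  -- rewrite hSj as a Finset sum
  have key : ∑ t ∈ (Finset.range n).powersetCard j, ∏ i ∈ t, (-z (i + 1)) = 0 := by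
    have h0 : ((P.roots.map (fun z => -z)).esymm j) = 0 := hSj
    rw [hroots, Multiset.map_map, ← Finset.range_val, Finset.esymm_map_val] at h0
    exact h0
  set F := (Finset.range n).powersetCard j with hF
  set T := Finset.range j with hT_def
  have hT : T ∈ F := Finset.mem_powersetCard.mpr
    ⟨Finset.range_subset_range.mpr (by omega), Finset.card_range j⟩
  set B : ℝ := (∏ i ∈ Finset.range (j - 1), w i) * w j with hB_def
  have hBnn : 0 ≤ B := mul_nonneg (Finset.prod_nonneg fun i _ => hw i) (hw j)
  -- each non-top term is bounded by B
  have hb : ∀ t ∈ F.erase T, ‖∏ i ∈ t, -z (i + 1)‖ ≤ B := by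
    intro t ht
    obtain ⟨hne, htF⟩ := Finset.mem_erase.mp ht
    obtain ⟨hsub, hcard⟩ := Finset.mem_powersetCard.mp htF
    have h1 : ‖∏ i ∈ t, -z (i + 1)‖ = ∏ i ∈ t, w i := by
      rw [norm_prod]
      exact Finset.prod_congr rfl fun i _ => by simp [hw_def]
    obtain ⟨m, hm, hjm⟩ : ∃ m ∈ t, j ≤ m := by
      by_contra h
      push_neg at h
      exact hne (Finset.eq_of_subset_of_card_le
        (fun x hx => Finset.mem_range.mpr (h x hx))
        (by rw [hcard, Finset.card_range]))
    have hmn : m < n := Finset.mem_range.mp (hsub hm)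
    have hc : (t.erase m).card = j - 1 := by
      rw [Finset.card_erase_of_mem hm, hcard]
    have h2 : ∏ i ∈ t.erase m, w i ≤ ∏ i ∈ Finset.range (j - 1), w i := by
      have := prod_le_prod_range w hw n hmono (t.erase m)
        (fun x hx => Finset.mem_range.mp (hsub (Finset.erase_subset _ _ hx)))
      rwa [hc] at this
    rw [h1, ← Finset.prod_erase_mul t w hm]
    exact mul_le_mul h2 (hmono j m hjm hmn)
      (hw m) (Finset.prod_nonneg fun i _ => hw i)
  -- the top term is bounded by the sum of the others
  have hsplit : ∏ i ∈ T, -z (i + 1) = -∑ t ∈ F.erase T, ∏ i ∈ t, -z (i + 1) := by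
    have h := Finset.add_sum_erase F (fun t => ∏ i ∈ t, -z (i + 1)) hT
    rw [key] at h
    linear_combination h
  have habs : ‖∏ i ∈ T, -z (i + 1)‖ ≤
      ∑ t ∈ F.erase T, ‖∏ i ∈ t, -z (i + 1)‖ := by
    rw [hsplit, norm_neg]
    exact norm_sum_le _ _
  have hcardF : F.card = n.choose j := by
    rw [hF, Finset.card_powersetCard, Finset.card_range]
  have hmain : ‖∏ i ∈ T, -z (i + 1)‖ ≤ (n.choose j : ℝ) * B := by
    refine habs.trans ?_
    refine (Finset.sum_le_card_nsmul _ _ _ hb).trans ?_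
    rw [nsmul_eq_mul]
    refine mul_le_mul_of_nonneg_right ?_ hBnn
    have : (F.erase T).card ≤ F.card := Finset.card_erase_le
    exact_mod_cast this.trans hcardF.le
  -- identify the abs of products
  have hTabs : ‖∏ i ∈ T, -z (i + 1)‖ = ∏ i ∈ Finset.range j, w i := by
    rw [norm_prod]
    exact Finset.prod_congr rfl fun i _ => by simp [hw_def]
  have hIcc : ∀ k, ‖∏ i ∈ Finset.Icc 1 k, z i‖ = ∏ i ∈ Finset.range k, w i := by
    intro k
    induction k with
    | zero => simp
    | succ k ih =>
      rw [Finset.prod_Icc_succ_top (by omega : 1 ≤ k + 1), norm_mul, ih,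
        Finset.prod_range_succ]
  have hsecond : ‖∏ i ∈ Finset.Icc 1 j, z i‖ ≤
      (n.choose j : ℝ) * ‖(∏ i ∈ Finset.Icc 1 (j - 1), z i) * z (j + 1)‖ := by
    rw [norm_mul, hIcc, hIcc]
    calc ∏ i ∈ Finset.range j, w i = ‖∏ i ∈ T, -z (i + 1)‖ := hTabs.symm
      _ ≤ (n.choose j : ℝ) * B := hmain
      _ = _ := by rw [hB_def]
  refine ⟨?_, hsecond⟩
  -- derive the first claim
  have hzj : 0 < ‖z j‖ := norm_pos_iff.mpr hz
  have hD : 0 < ∏ i ∈ Finset.range (j - 1), w i := by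
    apply Finset.prod_pos
    intro i hi
    have hij : i + 1 ≤ j := by have := Finset.mem_range.mp hi; omega
    calc (0:ℝ) < ‖z j‖ := hzj
      _ ≤ w i := hord (i + 1) j (by omega) hij (by omega)
  have hsplit2 : ∏ i ∈ Finset.range j, w i = (∏ i ∈ Finset.range (j - 1), w i) * w (j - 1) := by
    conv_lhs => rw [show j = (j - 1) + 1 from by omega, Finset.prod_range_succ]
  have hwj1 : w (j - 1) = ‖z j‖ := by
    have h6 : j - 1 + 1 = j := by omega
    simp only [hw_def, h6]
  have h3 : (∏ i ∈ Finset.range (j - 1), w i) * ‖z j‖ ≤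
      (n.choose j : ℝ) * ((∏ i ∈ Finset.range (j - 1), w i) * w j) := by
    calc (∏ i ∈ Finset.range (j - 1), w i) * ‖z j‖
        = ∏ i ∈ Finset.range j, w i := by rw [hsplit2, hwj1]
      _ = ‖∏ i ∈ T, -z (i + 1)‖ := hTabs.symm
      _ ≤ (n.choose j : ℝ) * B := hmain
  have h4 : ‖z j‖ ≤ (n.choose j : ℝ) * w j := by
    have h5 : (∏ i ∈ Finset.range (j - 1), w i) * ‖z j‖ ≤
        (∏ i ∈ Finset.range (j - 1), w i) * ((n.choose j : ℝ) * w j) := by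
      calc _ ≤ (n.choose j : ℝ) * ((∏ i ∈ Finset.range (j - 1), w i) * w j) := h3
        _ = _ := by ring
    exact le_of_mul_le_mul_left h5 hD
  rw [mul_div_assoc'] at *
  rw [le_div_iff₀ hzj]
  linarith [h4]
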